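/- In any geometric graph containing a path with consecutive vertices v1, v2, v3, v4, v5 (in the plane, points in general position, edges drawn as straight segments), if segment v1v2 crosses segment v3v4 and segment v2v3 crosses segment v4v5, then segment v1v2 also crosses segment v4v5. -/

import Mathlib

noncomputable section

/-- A point of the plane. -/
abbrev Pt : Type := ℝ × ℝ

/-- Two straight segments cross: they meet at a point interior to both. -/
def SegCross (p q r s : Pt) : Prop :=
  (openSegment ℝ p q ∩ openSegment ℝ r s).Nonempty

/-- Points in general position: distinct, and no three collinear. -/
def GenPos {V : Type*} (pos : V → Pt) : Prop :=
  Function.Injective pos ∧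
    ∀ a b c : V, a ≠ b → b ≠ c → a ≠ c →
      ¬ Collinear ℝ ({pos a, pos b, pos c} : Set Pt)

namespace P5Aux

/-- Twice the signed area of the triangle `p q r`. -/
def dt (p q r : Pt) : ℝ := (q.1 - p.1) * (r.2 - p.2) - (q.2 - p.2) * (r.1 - p.1)

lemma dt_rot (p q r : Pt) : dt p q r = dt r p q := by
  simp only [dt]; ring

/-- If the determinant vanishes, the three points are collinear. -/
lemma collinear_of_dt_eq_zero {p q r : Pt} (h : dt p q r = 0) :
    Collinear ℝ ({p, q, r} : Set Pt) := by
  by_cases hpq : q = p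
  · subst hpq
    rw [Set.insert_idem]
    exact collinear_pair ℝ q r
  · have hne : q.1 - p.1 ≠ 0 ∨ q.2 - p.2 ≠ 0 := by
      by_contra hcon
      push_neg at hcon
      exact hpq (Prod.ext (by linarith [hcon.1]) (by linarith [hcon.2]))
    have main : ∀ w : Pt, dt p q w = 0 → ∃ t : ℝ, w = t • (q - p) + p := by
      intro w hw
      simp only [dt] at hw
      have mk : ∀ t : ℝ, w.1 = t * (q.1 - p.1) + p.1 → w.2 = t * (q.2 - p.2) + p.2 →
          w = t • (q - p) + p := by
        intro t c1 c2
        apply Prod.ext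
        · simpa only [Prod.fst_add, Prod.smul_fst, Prod.fst_sub, smul_eq_mul] using c1
        · simpa only [Prod.snd_add, Prod.smul_snd, Prod.snd_sub, smul_eq_mul] using c2
      rcases hne with h1 | h2
      · refine ⟨(w.1 - p.1) / (q.1 - p.1), mk _ ?_ ?_⟩
        · field_simp; ring
        · field_simp
          linear_combination hw
      · refine ⟨(w.2 - p.2) / (q.2 - p.2), mk _ ?_ ?_⟩
        · field_simp
          linear_combination -hw
        · field_simp; ring
    rw [collinear_iff_of_mem (Set.mem_insert p {q, r})]
    refine ⟨q - p, ?_⟩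
    intro x hx
    have hx0 : dt p q x = 0 := by
      rcases hx with rfl | rfl | rfl
      · simp only [dt]; ring
      · simp only [dt]; ring
      · exact h
    obtain ⟨t, ht⟩ := main x hx0
    exact ⟨t, ht⟩

/-- Crossing segments have endpoints on strictly opposite sides. -/
lemma cross_sign {p q r s : Pt} (h : SegCross p q r s)
    (hr : dt p q r ≠ 0) (hs : dt p q s ≠ 0) :
    dt p q r * dt p q s < 0 := by
  obtain ⟨z, hz1, hz2⟩ := h
  rw [openSegment, Set.mem_setOf_eq] at hz1 hz2
  obtain ⟨a, b, ha, hb, hab, habz⟩ := hz1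
  obtain ⟨c, d, hc, hd, hcd, hcdz⟩ := hz2
  obtain rfl : b = 1 - a := by linarith
  obtain rfl : d = 1 - c := by linarith
  have e1 : c * r.1 + (1 - c) * s.1 = a * p.1 + (1 - a) * q.1 := by
    have h1 := congrArg Prod.fst habz
    have h2 := congrArg Prod.fst hcdz
    simp only [Prod.fst_add, Prod.smul_fst, smul_eq_mul] at h1 h2
    linarith
  have e2 : c * r.2 + (1 - c) * s.2 = a * p.2 + (1 - a) * q.2 := by
    have h1 := congrArg Prod.snd habz
    have h2 := congrArg Prod.snd hcdz
    simp only [Prod.snd_add, Prod.smul_snd, smul_eq_mul] at h1 h2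
    linarith
  have key : c * dt p q r + (1 - c) * dt p q s = 0 := by
    simp only [dt]
    linear_combination (q.1 - p.1) * e2 - (q.2 - p.2) * e1
  have hA2 : 0 < dt p q r ^ 2 :=
    lt_of_le_of_ne (sq_nonneg _) (Ne.symm (pow_ne_zero 2 hr))
  have k2 : (1 - c) * (dt p q r * dt p q s) = -(c * dt p q r ^ 2) := by
    linear_combination dt p q r * key
  nlinarith [k2, hA2, hc, hd]

/-- Opposite-side conditions imply crossing. -/
lemma cross_of_signs {p q r s : Pt}
    (h1 : dt p q r * dt p q s < 0) (h2 : dt r s p * dt r s q < 0) :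
    SegCross p q r s := by
  set A := dt p q r with hA
  set B := dt p q s with hB
  set C := dt r s p with hC
  set E := dt r s q with hE
  have hid : C - E = B - A := by simp only [hA, hB, hC, hE, dt]; ring
  have key1 : E * p.1 - C * q.1 + B * r.1 - A * s.1 = 0 := by
    simp only [hA, hB, hC, hE, dt]; ring
  have key2 : E * p.2 - C * q.2 + B * r.2 - A * s.2 = 0 := by
    simp only [hA, hB, hC, hE, dt]; ring
  set D := A - B with hD
  have hsigns : (0 < A ∧ B < 0 ∧ C < 0 ∧ 0 < E ∧ 0 < D) ∨
      (A < 0 ∧ 0 < B ∧ 0 < C ∧ E < 0 ∧ D < 0) := by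
    rcases mul_neg_iff.mp h1 with ⟨hA0, hB0⟩ | ⟨hA0, hB0⟩
    · have hD0 : 0 < D := by rw [hD]; linarith
      have hC0 : C < 0 := by nlinarith
      have hE0 : 0 < E := by nlinarith
      exact Or.inl ⟨hA0, hB0, hC0, hE0, hD0⟩
    · have hD0 : D < 0 := by rw [hD]; linarith
      have hC0 : 0 < C := by nlinarith
      have hE0 : E < 0 := by nlinarith
      exact Or.inr ⟨hA0, hB0, hC0, hE0, hD0⟩
  have hDne : D ≠ 0 := by rcases hsigns with ⟨_,_,_,_,h⟩ | ⟨_,_,_,_,h⟩ <;> linarith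
  have hpE : 0 < E / D := by
    rcases hsigns with ⟨_,_,_,hE0,hD0⟩ | ⟨_,_,_,hE0,hD0⟩
    · exact div_pos hE0 hD0
    · exact div_pos_of_neg_of_neg hE0 hD0
  have hpC : 0 < -C / D := by
    rcases hsigns with ⟨_,_,hC0,_,hD0⟩ | ⟨_,_,hC0,_,hD0⟩
    · exact div_pos (by linarith) hD0
    · exact div_pos_of_neg_of_neg (by linarith) hD0
  have hpB : 0 < -B / D := by
    rcases hsigns with ⟨_,hB0,_,_,hD0⟩ | ⟨_,hB0,_,_,hD0⟩
    · exact div_pos (by linarith) hD0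
    · exact div_pos_of_neg_of_neg (by linarith) hD0
  have hpA : 0 < A / D := by
    rcases hsigns with ⟨hA0,_,_,_,hD0⟩ | ⟨hA0,_,_,_,hD0⟩
    · exact div_pos hA0 hD0
    · exact div_pos_of_neg_of_neg hA0 hD0
  refine ⟨(E / D) • p + (-C / D) • q, ?_, ?_⟩
  · rw [openSegment, Set.mem_setOf_eq]
    refine ⟨E / D, -C / D, hpE, hpC, ?_, rfl⟩
    rw [← add_div, div_eq_one_iff_eq hDne]
    rw [hD]; linarith [hid]
  · rw [openSegment, Set.mem_setOf_eq]
    refine ⟨-B / D, A / D, hpB, hpA, ?_, ?_⟩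
    · rw [← add_div, div_eq_one_iff_eq hDne]
      rw [hD]; ring
    · have e1 : -B * r.1 + A * s.1 = E * p.1 + -C * q.1 := by linarith [key1]
      have e2 : -B * r.2 + A * s.2 = E * p.2 + -C * q.2 := by linarith [key2]
      rw [Prod.ext_iff]
      constructor
      · simp only [Prod.fst_add, Prod.smul_fst, smul_eq_mul]
        rw [div_mul_eq_mul_div, div_mul_eq_mul_div, ← add_div,
          div_mul_eq_mul_div, div_mul_eq_mul_div, ← add_div, e1]
      · simp only [Prod.snd_add, Prod.smul_snd, smul_eq_mul]
        rw [div_mul_eq_mul_div, div_mul_eq_mul_div, ← add_div,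
          div_mul_eq_mul_div, div_mul_eq_mul_div, ← add_div, e2]

/-- Core sign lemma, positive leading case. -/
lemma core_pos {a b c e f g h x y : ℝ} (hapos : 0 < a)
    (IA : a - b + c - e = 0) (IB : e - f + g - h = 0)
    (IC : x * e = b * f - a * g) (ID : y * e = c * g - b * h)
    (h1 : a * b < 0) (h2 : c * e < 0) (h3 : e * f < 0) (h4 : g * h < 0) :
    b * x < 0 ∧ y * g < 0 := by
  have hb : b < 0 := by nlinarith
  have hc : c < 0 := by nlinarith
  have he : 0 < e := by nlinarith
  have hf : f < 0 := by nlinarith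
  have hg : g < 0 := by nlinarith
  have hh : 0 < h := by nlinarith
  have hx : 0 < x := by nlinarith
  have hy : 0 < y := by nlinarith
  exact ⟨by nlinarith, by nlinarith⟩

/-- Core sign lemma. -/
lemma core {a b c e f g h x y : ℝ}
    (IA : a - b + c - e = 0) (IB : e - f + g - h = 0)
    (IC : x * e = b * f - a * g) (ID : y * e = c * g - b * h)
    (h1 : a * b < 0) (h2 : c * e < 0) (h3 : e * f < 0) (h4 : g * h < 0) :
    b * x < 0 ∧ y * g < 0 := by
  have hane : a ≠ 0 := by rintro rfl; simp at h1
  rcases lt_or_gt_of_ne hane with ha | ha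
  · have := core_pos (a := -a) (b := -b) (c := -c) (e := -e) (f := -f)
      (g := -g) (h := -h) (x := -x) (y := -y)
      (by linarith) (by linarith) (by linarith) (by linarith [IC])
      (by linarith [ID]) (by nlinarith) (by nlinarith) (by nlinarith) (by nlinarith)
    exact ⟨by nlinarith [this.1], by nlinarith [this.2]⟩
  · exact core_pos ha IA IB IC ID h1 h2 h3 h4

end P5Aux

open P5Aux in
/-- If in a geometric path on vertices `v 0, …, v 4` the edge `e₁ = v0v1` crosses
`e₃ = v2v3` and `e₂ = v1v2` crosses `e₄ = v3v4`, then `e₁` crosses `e₄`. -/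
theorem p5_crossing_rule (v : Fin 5 → Pt) (hgen : GenPos v)
    (h13 : SegCross (v 0) (v 1) (v 2) (v 3))
    (h24 : SegCross (v 1) (v 2) (v 3) (v 4)) :
    SegCross (v 0) (v 1) (v 3) (v 4) := by
  have hdt : ∀ i j k : Fin 5, i ≠ j → j ≠ k → i ≠ k → dt (v i) (v j) (v k) ≠ 0 := by
    intro i j k hij hjk hik hz
    exact hgen.2 i j k hij hjk hik (collinear_of_dt_eq_zero hz)
  have h13' : SegCross (v 2) (v 3) (v 0) (v 1) := by
    obtain ⟨z, hz1, hz2⟩ := h13; exact ⟨z, hz2, hz1⟩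
  have h24' : SegCross (v 3) (v 4) (v 1) (v 2) := by
    obtain ⟨z, hz1, hz2⟩ := h24; exact ⟨z, hz2, hz1⟩
  have H1 : dt (v 0) (v 1) (v 2) * dt (v 0) (v 1) (v 3) < 0 :=
    cross_sign h13 (hdt 0 1 2 (by decide) (by decide) (by decide))
      (hdt 0 1 3 (by decide) (by decide) (by decide))
  have H2 : dt (v 0) (v 2) (v 3) * dt (v 1) (v 2) (v 3) < 0 := by
    have := cross_sign h13'
      (by rw [dt_rot (v 2) (v 3) (v 0)]; exact hdt 0 2 3 (by decide) (by decide) (by decide))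
      (by rw [dt_rot (v 2) (v 3) (v 1)]; exact hdt 1 2 3 (by decide) (by decide) (by decide))
    rwa [dt_rot (v 2) (v 3) (v 0), dt_rot (v 2) (v 3) (v 1)] at this
  have H3 : dt (v 1) (v 2) (v 3) * dt (v 1) (v 2) (v 4) < 0 :=
    cross_sign h24 (hdt 1 2 3 (by decide) (by decide) (by decide))
      (hdt 1 2 4 (by decide) (by decide) (by decide))
  have H4 : dt (v 1) (v 3) (v 4) * dt (v 2) (v 3) (v 4) < 0 := by
    have := cross_sign h24'
      (by rw [dt_rot (v 3) (v 4) (v 1)]; exact hdt 1 3 4 (by decide) (by decide) (by decide))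
      (by rw [dt_rot (v 3) (v 4) (v 2)]; exact hdt 2 3 4 (by decide) (by decide) (by decide))
    rwa [dt_rot (v 3) (v 4) (v 1), dt_rot (v 3) (v 4) (v 2)] at this
  have IA : dt (v 0) (v 1) (v 2) - dt (v 0) (v 1) (v 3) + dt (v 0) (v 2) (v 3)
      - dt (v 1) (v 2) (v 3) = 0 := by simp only [dt]; ring
  have IB : dt (v 1) (v 2) (v 3) - dt (v 1) (v 2) (v 4) + dt (v 1) (v 3) (v 4)
      - dt (v 2) (v 3) (v 4) = 0 := by simp only [dt]; ring
  have IC : dt (v 0) (v 1) (v 4) * dt (v 1) (v 2) (v 3)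
      = dt (v 0) (v 1) (v 3) * dt (v 1) (v 2) (v 4)
        - dt (v 0) (v 1) (v 2) * dt (v 1) (v 3) (v 4) := by simp only [dt]; ring
  have ID : dt (v 0) (v 3) (v 4) * dt (v 1) (v 2) (v 3)
      = dt (v 0) (v 2) (v 3) * dt (v 1) (v 3) (v 4)
        - dt (v 0) (v 1) (v 3) * dt (v 2) (v 3) (v 4) := by simp only [dt]; ring
  obtain ⟨G1, G2⟩ := core IA IB IC ID H1 H2 H3 H4
  apply cross_of_signs
  · exact G1
  · rw [dt_rot (v 3) (v 4) (v 0), dt_rot (v 3) (v 4) (v 1)]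
    exact G2
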